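/- Let Y and Z be nonzero real Banach spaces, let 1 ≤ p < ∞, and let X = Y ⊕_p Z. Then t(X) ≥ ((t(Y) − 1)^p + 1)^{1/p}. -/

import Mathlib

open ENNReal
/-- The thinness index `t(X)` of a normed space. -/
noncomputable def thinness (X : Type*) [NormedAddCommGroup X] : ℝ :=
  sInf {r : ℝ | 0 < r ∧ ∀ (n : ℕ) (x : Fin n → X), (∀ i, ‖x i‖ = 1) →
    ∀ ε : ℝ, 0 < ε → ∃ y : X, ‖y‖ = 1 ∧ ∀ i, ‖x i - y‖ < r + ε}

private lemma thinness_two_mem (E : Type*) [NormedAddCommGroup E] [NormedSpace ℝ E]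
    [Nontrivial E] :
    (2:ℝ) ∈ {r : ℝ | 0 < r ∧ ∀ (n : ℕ) (x : Fin n → E), (∀ i, ‖x i‖ = 1) →
      ∀ ε : ℝ, 0 < ε → ∃ y : E, ‖y‖ = 1 ∧ ∀ i, ‖x i - y‖ < r + ε} := by
  refine ⟨two_pos, fun n x hx ε hε => ?_⟩
  cases n with
  | zero =>
    obtain ⟨e, he⟩ := exists_norm_eq E zero_le_one
    exact ⟨e, he, fun i => i.elim0⟩
  | succ m =>
    refine ⟨-(x 0), by rw [norm_neg]; exact hx 0, fun i => ?_⟩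
    calc ‖x i - -(x 0)‖ = ‖x i + x 0‖ := by rw [sub_neg_eq_add]
    _ ≤ ‖x i‖ + ‖x 0‖ := norm_add_le _ _
    _ = 2 := by rw [hx i, hx 0]; norm_num
    _ < 2 + ε := by linarith

private lemma thinness_one_le_of_mem {E : Type*} [NormedAddCommGroup E] [NormedSpace ℝ E]
    [Nontrivial E] {r : ℝ}
    (h : ∀ (n : ℕ) (x : Fin n → E), (∀ i, ‖x i‖ = 1) → ∀ ε : ℝ, 0 < ε →
      ∃ y : E, ‖y‖ = 1 ∧ ∀ i, ‖x i - y‖ < r + ε) : 1 ≤ r := by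
  by_contra hlt
  push_neg at hlt
  obtain ⟨e, he⟩ := exists_norm_eq E zero_le_one
  obtain ⟨y, hy, hyi⟩ := h 2 ![e, -e] (by intro i; fin_cases i <;> simp [he]) ((1 - r)/2)
    (by linarith)
  have h0 := hyi 0
  have h1 := hyi 1
  simp only [Matrix.cons_val_zero, Matrix.cons_val_one, Matrix.head_cons] at h0 h1
  have hsum : (2:ℝ) ≤ ‖e - y‖ + ‖-e - y‖ := by
    have h2 : e - y - (-e - y) = e + e := by abel
    have h3 : ‖e - y - (-e - y)‖ ≤ ‖e - y‖ + ‖-e - y‖ := norm_sub_le _ _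
    rw [h2] at h3
    have h4 : ‖e + e‖ = 2 := by
      rw [← two_smul ℝ e, norm_smul, he]
      simp
    linarith
  linarith

private lemma thinness_ge_one (E : Type*) [NormedAddCommGroup E] [NormedSpace ℝ E]
    [Nontrivial E] : 1 ≤ thinness E := by
  unfold thinness
  exact le_csInf ⟨2, thinness_two_mem E⟩ fun r hr => thinness_one_le_of_mem hr.2

private lemma real_add_rpow_le_rpow_add {x y q : ℝ} (hx : 0 ≤ x) (hy : 0 ≤ y) (hq : 1 ≤ q) :
    x ^ q + y ^ q ≤ (x + y) ^ q := by
  have h := NNReal.add_rpow_le_rpow_add x.toNNReal y.toNNReal hq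
  have h2 := NNReal.coe_le_coe.mpr h
  rwa [NNReal.coe_add, NNReal.coe_rpow, NNReal.coe_rpow, NNReal.coe_rpow, NNReal.coe_add,
    Real.coe_toNNReal x hx, Real.coe_toNNReal y hy] at h2

private lemma rpow_superadd {A t q : ℝ} (hA : 0 ≤ A) (ht : 0 ≤ t) (hq : 1 ≤ q) :
    (A + t ^ q) ^ (1/q) ≤ A ^ (1/q) + t := by
  have hq0 : (0:ℝ) < q := lt_of_lt_of_le one_pos hq
  have h1 : A + t ^ q ≤ (A ^ (1/q) + t) ^ q := by
    have h := real_add_rpow_le_rpow_add (Real.rpow_nonneg hA (1/q)) ht hq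
    rwa [show ((A:ℝ) ^ (1/q)) ^ q = A from by
      rw [one_div, Real.rpow_inv_rpow hA (ne_of_gt hq0)]] at h
  calc (A + t ^ q) ^ (1/q) ≤ ((A ^ (1/q) + t) ^ q) ^ (1/q) :=
        Real.rpow_le_rpow (by positivity) h1 (by positivity)
  _ = A ^ (1/q) + t := by rw [one_div, Real.rpow_rpow_inv (by positivity) (ne_of_gt hq0)]

/-- For the `ℓ_p`-sum `X = Y ⊕_p Z` (`1 ≤ p < ∞`) of nonzero Banach spaces one has
`t(X) ≥ ((t(Y) - 1)^p + 1)^(1/p)` (real powers). -/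
theorem thinness_prodLp_ge (p : ℝ≥0∞) [Fact (1 ≤ p)] (hp : p ≠ ⊤)
    (Y Z : Type*) [NormedAddCommGroup Y] [NormedSpace ℝ Y] [CompleteSpace Y] [Nontrivial Y]
    [NormedAddCommGroup Z] [NormedSpace ℝ Z] [CompleteSpace Z] [Nontrivial Z] :
    ((thinness Y - 1) ^ p.toReal + 1) ^ (1 / p.toReal) ≤ thinness (WithLp p (Y × Z)) := by
  have hp1 : (1:ℝ≥0∞) ≤ p := Fact.out
  have hpr : 1 ≤ p.toReal := by
    rw [← ENNReal.toReal_one]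
    exact ENNReal.toReal_mono hp hp1
  set q := p.toReal with hqdef
  have hpr0 : 0 < q := lt_of_lt_of_le one_pos hpr
  have hq0ne : q ≠ 0 := ne_of_gt hpr0
  haveI : Nontrivial (WithLp p (Y × Z)) := inferInstance
  unfold thinness
  refine le_csInf ⟨2, thinness_two_mem _⟩ fun r hr => ?_
  obtain ⟨hr0, hrm⟩ := hr
  have hr1 : 1 ≤ r := thinness_one_le_of_mem hrm
  have hrq1 : (1:ℝ) ≤ r ^ q := by
    calc (1:ℝ) = 1 ^ q := (Real.one_rpow q).symm
    _ ≤ r ^ q := Real.rpow_le_rpow zero_le_one hr1 (le_of_lt hpr0)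
  set s : ℝ := 1 + (r ^ q - 1) ^ (1/q) with hs
  have hs0 : 0 ≤ (r ^ q - 1) ^ (1/q) := Real.rpow_nonneg (by linarith) _
  -- norm formula
  have hnorm : ∀ (a : Y) (b : Z),
      ‖(WithLp.equiv p (Y × Z)).symm (a, b)‖ = (‖a‖ ^ q + ‖b‖ ^ q) ^ (1/q) := by
    intro a b
    rw [WithLp.prod_norm_eq_add hpr0]; rfl
  -- key step : thinness Y ≤ s
  have hkey : thinness Y ≤ s := by
    by_contra hc
    push_neg at hc
    set δ : ℝ := (thinness Y - s)/2 with hδdef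
    have hδ : 0 < δ := hδdef ▸ div_pos (sub_pos.mpr hc) two_pos
    have hmem : s + δ ∈ {r : ℝ | 0 < r ∧ ∀ (n : ℕ) (x : Fin n → Y), (∀ i, ‖x i‖ = 1) →
        ∀ ε : ℝ, 0 < ε → ∃ y : Y, ‖y‖ = 1 ∧ ∀ i, ‖x i - y‖ < r + ε} := by
      refine ⟨by simp only [hs]; linarith, fun n y hy ε hε => ?_⟩
      cases n with
      | zero =>
        obtain ⟨e, he⟩ := exists_norm_eq Y zero_le_one
        exact ⟨e, he, fun i => i.elim0⟩
      | succ m =>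
        -- choose ε' > 0 with 1 + ((r+ε')^q - 1)^(1/q) < s + δ
        have hcont : ContinuousAt (fun t : ℝ => 1 + ((r + t) ^ q - 1) ^ (1/q)) 0 := by
          refine continuousAt_const.add ?_
          refine ContinuousAt.rpow_const ?_ (Or.inr (by positivity))
          exact (continuousAt_const.add continuousAt_id).rpow_const
            (Or.inr (le_of_lt hpr0)) |>.sub continuousAt_const
        have hval : 1 + ((r + 0) ^ q - 1) ^ (1/q) < s + δ := by
          rw [add_zero, hs]; linarith
        have hev : ∀ᶠ t in nhds (0:ℝ), 1 + ((r + t) ^ q - 1) ^ (1/q) < s + δ :=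
          hcont.eventually_lt_const hval
        obtain ⟨ε', hlt', hε'pos⟩ :=
          ((hev.filter_mono nhdsWithin_le_nhds).and
            (eventually_mem_nhdsWithin (s := Set.Ioi (0:ℝ)))).exists
        rw [Set.mem_Ioi] at hε'pos
        have hrε1 : (1:ℝ) ≤ (r + ε') ^ q := by
          calc (1:ℝ) = 1 ^ q := (Real.one_rpow q).symm
          _ ≤ (r + ε') ^ q := Real.rpow_le_rpow zero_le_one (by linarith) (le_of_lt hpr0)
        -- apply hrm
        obtain ⟨u, hu, hui⟩ := hrm (m + 1)
          (fun i => (WithLp.equiv p (Y × Z)).symm (y i, 0))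
          (fun i => by
            rw [hnorm, hy i, norm_zero, Real.one_rpow, Real.zero_rpow hq0ne, add_zero,
              Real.one_rpow])
          ε' hε'pos
        -- decompose u
        have hu' : (‖u.fst‖ ^ q + ‖u.snd‖ ^ q) ^ (1/q) = 1 := by
          rw [← WithLp.prod_norm_eq_add hpr0]; exact hu
        have hS : ‖u.fst‖ ^ q + ‖u.snd‖ ^ q = 1 := by
          have h0 : (0:ℝ) ≤ ‖u.fst‖ ^ q + ‖u.snd‖ ^ q := by positivity
          calc ‖u.fst‖ ^ q + ‖u.snd‖ ^ q
              = ((‖u.fst‖ ^ q + ‖u.snd‖ ^ q) ^ (1/q)) ^ q := by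
                rw [one_div, Real.rpow_inv_rpow h0 hq0ne]
          _ = 1 := by rw [hu', Real.one_rpow]
        have hdist : ∀ i : Fin (m+1), ‖y i - u.fst‖ ^ q + ‖u.snd‖ ^ q < (r + ε') ^ q := by
          intro i
          have h := hui i
          have hfs : ((WithLp.equiv p (Y × Z)).symm (y i, 0) - u).fst = y i - u.fst := rfl
          have hsn : ((WithLp.equiv p (Y × Z)).symm (y i, 0) - u).snd = 0 - u.snd := rfl
          rw [WithLp.prod_norm_eq_add hpr0, hfs, hsn, zero_sub, norm_neg] at h
          have hA : (0:ℝ) ≤ ‖y i - u.fst‖ ^ q + ‖u.snd‖ ^ q := by positivity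
          calc ‖y i - u.fst‖ ^ q + ‖u.snd‖ ^ q
              = ((‖y i - u.fst‖ ^ q + ‖u.snd‖ ^ q) ^ (1/q)) ^ q := by
                rw [one_div, Real.rpow_inv_rpow hA hq0ne]
          _ < (r + ε') ^ q := Real.rpow_lt_rpow (Real.rpow_nonneg hA _) h hpr0
        by_cases hfz : u.fst = 0
        · -- then the first coordinates are far, forcing (r+ε')^q > 2
          have hsnd : ‖u.snd‖ ^ q = 1 := by
            rw [hfz, norm_zero, Real.zero_rpow hq0ne, zero_add] at hS
            exact hS
          have h2 : (2:ℝ) < (r + ε') ^ q := by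
            have h := hdist 0
            rw [hfz, sub_zero, hy 0, Real.one_rpow, hsnd] at h
            linarith
          have h3 : (1:ℝ) < ((r + ε') ^ q - 1) ^ (1/q) := by
            calc (1:ℝ) = 1 ^ (1/q) := (Real.one_rpow _).symm
            _ < ((r + ε') ^ q - 1) ^ (1/q) :=
              Real.rpow_lt_rpow zero_le_one (by linarith) (by positivity)
          refine ⟨y 0, hy 0, fun i => ?_⟩
          calc ‖y i - y 0‖ ≤ ‖y i‖ + ‖y 0‖ := norm_sub_le _ _
          _ = 2 := by rw [hy i, hy 0]; norm_num
          _ < 1 + ((r + ε') ^ q - 1) ^ (1/q) := by linarith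
          _ < s + δ := hlt'
          _ < s + δ + ε := by linarith
        · -- normalize u.fst
          have hfn : 0 < ‖u.fst‖ := norm_pos_iff.mpr hfz
          have ha1 : ‖u.fst‖ ≤ 1 := by
            by_contra hgt
            push_neg at hgt
            have h1 : (1:ℝ) < ‖u.fst‖ ^ q := by
              calc (1:ℝ) = 1 ^ q := (Real.one_rpow q).symm
              _ < ‖u.fst‖ ^ q := Real.rpow_lt_rpow zero_le_one hgt hpr0
            have h2 : (0:ℝ) ≤ ‖u.snd‖ ^ q := Real.rpow_nonneg (norm_nonneg _) q
            linarith
          refine ⟨‖u.fst‖⁻¹ • u.fst, ?_, fun i => ?_⟩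
          · rw [norm_smul, norm_inv, norm_norm, inv_mul_cancel₀ (ne_of_gt hfn)]
          · have hA0 : (0:ℝ) ≤ (r + ε') ^ q - 1 := by linarith
            have hstep1 : ‖y i - u.fst‖ < ((r + ε') ^ q - 1 + ‖u.fst‖ ^ q) ^ (1/q) := by
              have hlt2 : ‖y i - u.fst‖ ^ q < (r + ε') ^ q - 1 + ‖u.fst‖ ^ q := by
                have := hdist i
                linarith
              calc ‖y i - u.fst‖ = (‖y i - u.fst‖ ^ q) ^ (1/q) := by
                    rw [one_div, Real.rpow_rpow_inv (norm_nonneg _) hq0ne]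
              _ < ((r + ε') ^ q - 1 + ‖u.fst‖ ^ q) ^ (1/q) :=
                Real.rpow_lt_rpow (Real.rpow_nonneg (norm_nonneg _) _) hlt2 (by positivity)
            have hstep2 : ((r + ε') ^ q - 1 + ‖u.fst‖ ^ q) ^ (1/q)
                ≤ ((r + ε') ^ q - 1) ^ (1/q) + ‖u.fst‖ :=
              rpow_superadd hA0 (norm_nonneg _) hpr
            have hlast : ‖u.fst - ‖u.fst‖⁻¹ • u.fst‖ = 1 - ‖u.fst‖ := by
              have heq : u.fst - ‖u.fst‖⁻¹ • u.fst = (1 - ‖u.fst‖⁻¹) • u.fst := by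
                rw [sub_smul, one_smul]
              rw [heq, norm_smul, Real.norm_eq_abs]
              have hinv : (1:ℝ) ≤ ‖u.fst‖⁻¹ := (one_le_inv₀ hfn).mpr ha1
              rw [abs_of_nonpos (by linarith)]
              field_simp
              ring
            have htri : ‖y i - ‖u.fst‖⁻¹ • u.fst‖
                ≤ ‖y i - u.fst‖ + ‖u.fst - ‖u.fst‖⁻¹ • u.fst‖ := by
              have := dist_triangle (y i) u.fst (‖u.fst‖⁻¹ • u.fst)
              simpa only [dist_eq_norm] using this
            calc ‖y i - ‖u.fst‖⁻¹ • u.fst‖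
                ≤ ‖y i - u.fst‖ + ‖u.fst - ‖u.fst‖⁻¹ • u.fst‖ := htri
            _ < ((r + ε') ^ q - 1 + ‖u.fst‖ ^ q) ^ (1/q) + (1 - ‖u.fst‖) := by
                rw [hlast]; linarith
            _ ≤ ((r + ε') ^ q - 1) ^ (1/q) + ‖u.fst‖ + (1 - ‖u.fst‖) := by linarith
            _ = 1 + ((r + ε') ^ q - 1) ^ (1/q) := by ring
            _ < s + δ := hlt'
            _ < s + δ + ε := by linarith
    have : thinness Y ≤ s + δ := by
      unfold thinness
      exact csInf_le ⟨0, fun t ht => le_of_lt ht.1⟩ hmem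
    simp only [hδdef] at this
    linarith
  -- conclude
  have hty1 : 1 ≤ thinness Y := thinness_ge_one Y
  have h1 : thinness Y - 1 ≤ (r ^ q - 1) ^ (1/q) := by
    simp only [hs] at hkey; linarith
  have h0 : 0 ≤ thinness Y - 1 := by linarith
  have h2 : (thinness Y - 1) ^ q ≤ r ^ q - 1 := by
    calc (thinness Y - 1) ^ q ≤ ((r ^ q - 1) ^ (1/q)) ^ q :=
          Real.rpow_le_rpow h0 h1 (le_of_lt hpr0)
    _ = r ^ q - 1 := by rw [one_div, Real.rpow_inv_rpow (by linarith) hq0ne]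
  calc ((thinness Y - 1) ^ q + 1) ^ (1/q) ≤ (r ^ q) ^ (1/q) := by
        apply Real.rpow_le_rpow (by positivity) (by linarith) (by positivity)
  _ = r := by rw [one_div, Real.rpow_rpow_inv (by linarith) hq0ne]
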